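/- arXiv:1301.2835 — 2 statements merged into one kernel-verified Lean document; each statement's English description precedes it below -/
import Mathlib

section
/- Let R be a ring and let R[x,x^{-1}] be the Laurent polynomial ring over R, graded by ℤ with x in degree 1 and elements of R in degree 0. Then the nil radical of R[x,x^{-1}] is homogeneous: if a Laurent polynomial f = Σ_i r_i x^i belongs to the nil radical of R[x,x^{-1}], then each monomial r_i x^i belongs to the nil radical of R[x,x^{-1}]. -/
/-- A two-sided ideal of a ring is nil if all of its elements are nilpotent. -/
def TwoSidedIdeal.IsNil {R : Type*} [Ring R] (I : TwoSidedIdeal R) : Prop :=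
  ∀ x ∈ I, IsNilpotent x

/-- The nil radical of a ring: the sum of all its nil two-sided ideals. -/
noncomputable def nilRad (R : Type*) [Ring R] : TwoSidedIdeal R :=
  sSup {I : TwoSidedIdeal R | I.IsNil}

open LaurentPolynomial

local notation "sg" => AddMonoidAlgebra.single

section Prelim

variable {S : Type*} [Ring S]

theorem TwoSidedIdeal.pow_sub_pow_mem (J : TwoSidedIdeal S) {a b : S} (h : a - b ∈ J) :
    ∀ M : ℕ, a ^ M - b ^ M ∈ J
  | 0 => by simp
  | (M + 1) => by
    have h1 : a ^ (M + 1) - b ^ (M + 1) = a ^ M * (a - b) + (a ^ M - b ^ M) * b := by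
      rw [pow_succ a, pow_succ b]
      noncomm_ring
    rw [h1]
    exact J.add_mem (J.mul_mem_left _ _ h) (J.mul_mem_right _ _ (J.pow_sub_pow_mem h M))

theorem TwoSidedIdeal.mem_of_sub_mem (J : TwoSidedIdeal S) {a b : S} (h : a - b ∈ J)
    (hb : b ∈ J) : a ∈ J := by
  have := J.add_mem h hb
  simpa using this

end Prelim

section Laurent

variable {R : Type*} [Ring R]

local notation "A" => LaurentPolynomial R
local notation "B" => LaurentPolynomial (LaurentPolynomial R)

theorem single_eq (n : ℤ) (r : R) : (sg n r : A) = C r * T n := single_eq_C_mul_T r n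

/-- The marking monoid hom `n ↦ (T n) · Tᴮ n` into the double Laurent ring. -/
noncomputable def markUnit : Multiplicative ℤ →* B where
  toFun n := sg n.toAdd (T n.toAdd)
  map_one' := by
    show (sg (0:ℤ) (T 0) : B) = 1
    rw [T_zero]
    rfl
  map_mul' m n := by
    show (sg (m.toAdd + n.toAdd) (T (m.toAdd + n.toAdd)) : B) = _
    rw [T_add]
    exact (AddMonoidAlgebra.single_mul_single _ _ _ _).symm

theorem commute_single_single (r : R) (n : ℤ) :
    Commute (sg (0:ℤ) (C r : A) : B) (sg n (T n : A)) := by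
  show _ * _ = _ * _
  rw [AddMonoidAlgebra.single_mul_single, AddMonoidAlgebra.single_mul_single]
  rw [zero_add, add_zero, ← (commute_T n (C r)).eq]

/-- The "marking" ring homomorphism `A →+* B`, sending `single n r` to `single n (single n r)`. -/
noncomputable def mark : LaurentPolynomial R →+* B :=
  AddMonoidAlgebra.liftNCRingHom ((C : A →+* B).comp (C : R →+* A)) markUnit
    (fun r n => commute_single_single r n.toAdd)

theorem mark_single (n : ℤ) (r : R) :
    mark (sg n r : A) = sg n (sg n r : A) := by
  show AddMonoidAlgebra.liftNC _ _ (AddMonoidAlgebra.single n r) = _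
  rw [AddMonoidAlgebra.liftNC_single]
  show (sg (0:ℤ) (C r : A) : B) * sg n (T n : A) = _
  rw [AddMonoidAlgebra.single_mul_single, zero_add, ← single_eq]

/-- Summing all coefficients: the ring homomorphism `B →+* A` evaluating the outer
variable at `1`. -/
noncomputable def evAll : B →+* A :=
  AddMonoidAlgebra.liftNCRingHom (RingHom.id A) 1 (fun r n => by simp)

theorem evAll_single (n : ℤ) (a : A) : evAll (sg n a : B) = a := by
  show AddMonoidAlgebra.liftNC _ _ (AddMonoidAlgebra.single n a) = _
  rw [AddMonoidAlgebra.liftNC_single]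
  simp

theorem evAll_C (a : A) : evAll (C a) = a := evAll_single 0 a

theorem evAll_T (n : ℤ) : evAll (T n : B) = 1 := evAll_single n (1 : A)

theorem evAll_mark (x : A) : evAll (mark x) = x := by
  induction x using AddMonoidAlgebra.induction_linear with
  | zero => simp
  | add f g hf hg => rw [map_add, map_add, hf, hg]
  | single n r =>
    rw [mark_single, evAll_single]

end Laurent

section Laurent2

variable {R : Type*} [Ring R]

local notation "A" => LaurentPolynomial R
local notation "B" => LaurentPolynomial (LaurentPolynomial R)

/-- The two-sided ideal of `B` of elements all of whose coefficients lie in `N`. -/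
noncomputable def coeffIdeal (N : TwoSidedIdeal A) : TwoSidedIdeal B :=
  TwoSidedIdeal.mk' {h : B | ∀ m : ℤ, h.coeff m ∈ N}
    (fun m => by simpa using N.zero_mem)
    (fun {a b} ha hb m => by
      rw [show (a + b).coeff m = a.coeff m + b.coeff m from rfl]
      exact N.add_mem (ha m) (hb m))
    (fun {a} ha m => by
      rw [show (-a).coeff m = -(a.coeff m) from rfl]
      exact N.neg_mem (ha m))
    (fun {x y} hy m => by
      classical
      rw [AddMonoidAlgebra.coeff_mul]
      refine N.finsetSum_mem _ _ (fun a _ => N.finsetSum_mem _ _ (fun b _ => ?_))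
      dsimp only
      split
      · exact N.mul_mem_left _ _ (hy b)
      · exact N.zero_mem)
    (fun {x y} hx m => by
      classical
      rw [AddMonoidAlgebra.coeff_mul]
      refine N.finsetSum_mem _ _ (fun a _ => N.finsetSum_mem _ _ (fun b _ => ?_))
      dsimp only
      split
      · exact N.mul_mem_right _ _ (hx a)
      · exact N.zero_mem)

theorem mem_coeffIdeal {N : TwoSidedIdeal A} {h : B} :
    h ∈ coeffIdeal N ↔ ∀ m : ℤ, h.coeff m ∈ N :=
  TwoSidedIdeal.mem_mk' _ _ _ _ _ _ _

theorem evAll_mem_of_mem_coeffIdeal {N : TwoSidedIdeal A} {h : B}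
    (H : h ∈ coeffIdeal N) : evAll h ∈ N := by
  rw [mem_coeffIdeal] at H
  have e : evAll h = ∑ m ∈ h.coeff.support, h.coeff m := by
    conv_lhs => rw [← AddMonoidAlgebra.sum_coeff_single h]
    rw [Finsupp.sum, map_sum]
    exact Finset.sum_congr rfl (fun m _ => evAll_single m (h.coeff m))
  rw [e]
  exact N.finsetSum_mem _ _ (fun m _ => H m)

theorem single_T_mul_apply (h : B) (m : ℤ) : ((T 1 : B) * h).coeff m = h.coeff (m - 1) := by
  show ((sg (1:ℤ) (1:A) : B) * h).coeff m = h.coeff (m - 1)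
  rw [AddMonoidAlgebra.coeff_single_mul_apply, one_mul]
  congr 1
  ring

theorem one_sub_T_mul_apply (h : B) (m : ℤ) : ((1 - T 1 : B) * h).coeff m = h.coeff m - h.coeff (m - 1) := by
  have e1 : (1 - T 1 : B) * h = h - T 1 * h := by rw [sub_mul, one_mul]
  have e2 : ∀ (x y : B) (k : ℤ), (x - y).coeff k = x.coeff k - y.coeff k := fun _ _ _ => rfl
  rw [e1, e2, single_T_mul_apply]

theorem mem_coeffIdeal_of_one_sub_T_mul {N : TwoSidedIdeal A} {h : B}
    (H : (1 - T 1 : B) * h ∈ coeffIdeal N) : h ∈ coeffIdeal N := by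
  rw [mem_coeffIdeal] at H ⊢
  have key : ∀ m : ℤ, h.coeff m - h.coeff (m - 1) ∈ N := by
    intro m
    have hh := H m
    rwa [one_sub_T_mul_apply] at hh
  have low : ∀ m : ℤ, ∃ j : ℕ, h.coeff (m - (j : ℤ)) = 0 := by
    intro m
    by_cases hs : h.coeff.support.Nonempty
    · refine ⟨(m - h.coeff.support.min' hs + 1).toNat, ?_⟩
      apply Finsupp.notMem_support_iff.1
      intro hmem
      have h1 : h.coeff.support.min' hs ≤ m - (m - h.coeff.support.min' hs + 1).toNat :=
        Finset.min'_le _ _ hmem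
      have h2 : (m - h.coeff.support.min' hs + 1 : ℤ) ≤ ((m - h.coeff.support.min' hs + 1).toNat : ℤ) :=
        Int.self_le_toNat _
      omega
    · refine ⟨0, ?_⟩
      rw [Finset.not_nonempty_iff_eq_empty] at hs
      apply Finsupp.notMem_support_iff.1
      simp [hs]
  have aux : ∀ (j : ℕ) (m : ℤ), h.coeff (m - (j : ℤ)) ∈ N → h.coeff m ∈ N := by
    intro j
    induction j with
    | zero => intro m hm; simpa using hm
    | succ j ih =>
      intro m hm
      refine ih m ?_
      have e : m - (j : ℤ) - 1 = m - ((j + 1 : ℕ) : ℤ) := by push_cast; ring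
      have := key (m - (j : ℤ))
      rw [e] at this
      have := N.add_mem this hm
      simpa using this
  intro m
  obtain ⟨j, hj⟩ := low m
  exact aux j m (by rw [hj]; exact N.zero_mem)

theorem mem_coeffIdeal_of_pow_one_sub_T_mul {N : TwoSidedIdeal A} {h : B} :
    ∀ M : ℕ, (1 - T 1 : B) ^ M * h ∈ coeffIdeal N → h ∈ coeffIdeal N
  | 0 => by simpa using id
  | (M + 1) => fun H => by
    refine mem_coeffIdeal_of_pow_one_sub_T_mul M (mem_coeffIdeal_of_one_sub_T_mul ?_)
    rw [← mul_assoc, ← pow_succ']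
    exact H

end Laurent2

section Laurent3

variable {R : Type*} [Ring R]

local notation "A" => LaurentPolynomial R
local notation "B" => LaurentPolynomial (LaurentPolynomial R)

/-- Geometric sum `1 + T + ⋯ + T^(n-1)` in the double Laurent ring. -/
noncomputable def geom (n : ℕ) : B := ∑ i ∈ Finset.range n, T (i : ℤ)

theorem one_sub_T_mul_geom (n : ℕ) : (1 - T 1 : B) * geom n = 1 - T (n : ℤ) := by
  induction n with
  | zero => simp [geom]
  | succ n ih =>
    rw [geom, Finset.sum_range_succ, ← geom, mul_add, ih, sub_mul, one_mul,
      ← T_add]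
    push_cast
    abel

theorem evAll_geom (n : ℕ) : evAll (geom n) = (n : A) := by
  rw [geom, map_sum]
  simp [evAll_T]

/-- `zeta a` satisfies `(1 - T) * zeta a = 1 - T a` and `evAll (zeta a) = a`. -/
noncomputable def zeta (a : ℤ) : B :=
  if 0 ≤ a then geom a.toNat else -(T a * geom (-a).toNat)

theorem one_sub_T_mul_zeta (a : ℤ) : (1 - T 1 : B) * zeta a = 1 - T a := by
  rw [zeta]
  split_ifs with h
  · rw [one_sub_T_mul_geom, Int.toNat_of_nonneg h]
  · push_neg at h
    have c : ((-a).toNat : ℤ) = -a := Int.toNat_of_nonneg (by omega)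
    have comm : (1 - T 1 : B) * (T a * geom (-a).toNat)
        = T a * ((1 - T 1) * geom (-a).toNat) := by
      rw [← mul_assoc, ← (commute_T a (1 - T 1 : B)).eq, mul_assoc]
    have mn : (1 - T 1 : B) * -(T a * geom (-a).toNat)
        = -((1 - T 1 : B) * (T a * geom (-a).toNat)) := by
      rw [eq_comm, neg_eq_iff_add_eq_zero, ← mul_add, add_neg_cancel, mul_zero]
    rw [mn, comm, one_sub_T_mul_geom, c, mul_sub, mul_one, ← T_add,
      show a + -a = 0 by ring, T_zero, neg_sub]

theorem evAll_zeta (a : ℤ) : evAll (zeta a) = ((a : ℤ) : A) := by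
  rw [zeta]
  split_ifs with h
  · rw [evAll_geom]
    exact_mod_cast congrArg (fun z : ℤ => ((z : A))) (Int.toNat_of_nonneg h)
  · push_neg at h
    rw [map_neg, map_mul, evAll_T, evAll_geom, one_mul]
    have c : ((-a).toNat : ℤ) = -a := Int.toNat_of_nonneg (by omega)
    rw [show ((-a).toNat : A) = (((-a).toNat : ℤ) : A) from (Int.cast_natCast _).symm, c,
      Int.cast_neg, neg_neg]

/-- The "discrete derivative relative to pivot `s`" of a Laurent polynomial:
`∑ₙ gₙ (s - n) Tⁿ`. -/
noncomputable def gderiv (g : A) (s : ℤ) : A :=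
  ∑ n ∈ g.coeff.support, sg n (g.coeff n * ((s - n : ℤ) : R))

theorem gderiv_apply (g : A) (s m : ℤ) :
    (gderiv g s).coeff m = g.coeff m * ((s - m : ℤ) : R) := by
  classical
  have e : ∀ (S : Finset ℤ) (F : ℤ → A) (k : ℤ), (∑ n ∈ S, F n).coeff k = ∑ n ∈ S, (F n).coeff k := by
    intro S F k
    induction S using Finset.induction_on with
    | empty => simp
    | @insert a s ha ih =>
      rw [Finset.sum_insert ha, Finset.sum_insert ha, ← ih]
      rfl
  rw [gderiv, e]
  have e2 : ∀ n ∈ g.coeff.support, (sg n (g.coeff n * ((s - n : ℤ) : R)) : A).coeff m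
      = if n = m then g.coeff n * ((s - n : ℤ) : R) else 0 := by
    intro n _
    exact AddMonoidAlgebra.coeff_single_apply
  rw [Finset.sum_congr rfl e2, Finset.sum_ite_eq' g.coeff.support m
    (fun n => g.coeff n * ((s - n : ℤ) : R))]
  split_ifs with hm
  · rfl
  · rw [Finsupp.notMem_support_iff.1 hm, zero_mul]

theorem gderiv_support (g : A) (s : ℤ) : (gderiv g s).coeff.support ⊆ g.coeff.support.erase s := by
  intro m hm
  rw [Finsupp.mem_support_iff, gderiv_apply] at hm
  rw [Finset.mem_erase, Finsupp.mem_support_iff]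
  constructor
  · rintro rfl
    simp at hm
  · intro h0
    rw [h0, zero_mul] at hm
    exact hm rfl

end Laurent3

section Laurent4

variable {R : Type*} [Ring R]

local notation "A" => LaurentPolynomial R
local notation "B" => LaurentPolynomial (LaurentPolynomial R)

theorem sum_single_support (g : A) : ∑ n ∈ g.coeff.support, (sg n (g.coeff n) : A) = g := by
  have := AddMonoidAlgebra.sum_coeff_single g
  rwa [Finsupp.sum] at this

theorem mark_eq (g : A) : mark g = ∑ n ∈ g.coeff.support, (sg n (sg n (g.coeff n) : A) : B) := by
  conv_lhs => rw [← sum_single_support g]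
  rw [map_sum]
  exact Finset.sum_congr rfl (fun n _ => mark_single n (g.coeff n))

theorem one_sub_T_central (x : B) : Commute (1 - T 1 : B) x :=
  (Commute.one_left _).sub_left (commute_T 1 _)

theorem mul_neg'' {S : Type*} [Ring S] (x y : S) : x * -y = -(x * y) := by
  rw [eq_comm, neg_eq_iff_add_eq_zero, ← mul_add, add_neg_cancel, mul_zero]

theorem single_zero_sum {ι : Type*} (S : Finset ι) (F : ι → A) :
    (sg (0:ℤ) (∑ i ∈ S, F i) : B) = ∑ i ∈ S, (sg (0:ℤ) (F i) : B) := by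
  classical
  induction S using Finset.induction_on with
  | empty =>
    show (sg (0:ℤ) (0 : A) : B) = 0
    exact AddMonoidAlgebra.single_zero 0
  | @insert a s ha ih =>
    rw [Finset.sum_insert ha, Finset.sum_insert ha, AddMonoidAlgebra.single_add, ih]

/-- the auxiliary element `τ` used for the pivot trick -/
noncomputable def tau (g : A) (s : ℤ) : B :=
  ∑ n ∈ g.coeff.support, (sg (0:ℤ) (sg n (g.coeff n) : A) : B) * (zeta s - zeta n)

theorem evAll_tau (g : A) (s : ℤ) : evAll (tau g s) = gderiv g s := by
  rw [tau, map_sum, gderiv]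
  refine Finset.sum_congr rfl (fun n _ => ?_)
  rw [map_mul, evAll_single, map_sub, evAll_zeta, evAll_zeta]
  have e1 : ((s : ℤ) : A) - ((n : ℤ) : A) = (((s - n : ℤ) : ℤ) : A) := by
    push_cast
    abel
  rw [e1]
  have e2 : (((s - n : ℤ) : ℤ) : A) = C (((s - n : ℤ) : ℤ) : R) :=
    (map_intCast (C : R →+* LaurentPolynomial R) _).symm
  rw [e2]
  show (sg n (g.coeff n) : A) * (sg (0:ℤ) (((s - n : ℤ) : ℤ) : R) : A) = _
  rw [AddMonoidAlgebra.single_mul_single, add_zero]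

theorem pivot_key {N : TwoSidedIdeal A} (g : A) (hg : g ∈ N) (s : ℤ) :
    (1 - T 1 : B) * tau g s - mark g ∈ coeffIdeal N := by
  have hcn : ∀ n : ℤ, (sg (0:ℤ) (sg n (g.coeff n) : A) : B) * T n = sg n (sg n (g.coeff n) : A) := by
    intro n
    show _ * (sg n (1:A) : B) = _
    rw [AddMonoidAlgebra.single_mul_single, zero_add, mul_one]
  have hterm : ∀ n : ℤ,
      (1 - T 1 : B) * ((sg (0:ℤ) (sg n (g.coeff n) : A) : B) * (zeta s - zeta n))
        = (sg n (sg n (g.coeff n) : A) : B) - (sg (0:ℤ) (sg n (g.coeff n) : A) : B) * T s := by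
    intro n
    rw [← mul_assoc, (one_sub_T_central (sg (0:ℤ) (sg n (g.coeff n) : A) : B)).eq, mul_assoc,
      mul_sub ((1 - T 1 : B)), one_sub_T_mul_zeta, one_sub_T_mul_zeta,
      sub_sub_sub_cancel_left, mul_sub, hcn]
  have main : (1 - T 1 : B) * tau g s - mark g = -(sg s (g : A) : B) := by
    rw [tau, Finset.mul_sum, Finset.sum_congr rfl (fun n _ => hterm n),
      Finset.sum_sub_distrib, ← mark_eq, ← Finset.sum_mul]
    have e3 : ∑ n ∈ g.coeff.support, (sg (0:ℤ) (sg n (g.coeff n) : A) : B)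
        = (sg (0:ℤ) (g : A) : B) := by
      rw [← single_zero_sum, sum_single_support g]
    rw [e3]
    have e4 : (sg (0:ℤ) (g : A) : B) * T s = sg s (g : A) := by
      show _ * (sg s (1:A) : B) = _
      rw [AddMonoidAlgebra.single_mul_single, zero_add, mul_one]
    rw [e4]
    abel
  rw [main, mem_coeffIdeal]
  intro m
  have : (-(sg s (g : A) : B)).coeff m = -((sg s (g : A) : B).coeff m) := rfl
  rw [this]
  by_cases hsm : s = m
  · rw [show ((sg s (g : A) : B).coeff m) = g by rw [← hsm]; exact Finsupp.single_eq_same]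
    exact N.neg_mem hg
  · rw [show ((sg s (g : A) : B).coeff m) = 0 from Finsupp.single_eq_of_ne' hsm]
    simpa using N.zero_mem

/-- The enlarged nil ideal produced by the pivot trick. -/
noncomputable def pivotIdeal (N : TwoSidedIdeal A) : TwoSidedIdeal A :=
  TwoSidedIdeal.mk'
    {x : A | ∃ τ : B, ∃ σ : A, σ ∈ N ∧ x - evAll τ ∈ N ∧
      (1 - T 1 : B) * τ - mark σ ∈ coeffIdeal N}
    ⟨0, 0, N.zero_mem, by rw [map_zero, sub_zero]; exact N.zero_mem,
      by rw [mul_zero, map_zero, sub_zero]; exact (coeffIdeal N).zero_mem⟩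
    (by
      rintro a b ⟨τa, σa, hσa, h1a, h2a⟩ ⟨τb, σb, hσb, h1b, h2b⟩
      refine ⟨τa + τb, σa + σb, N.add_mem hσa hσb, ?_, ?_⟩
      · rw [map_add, show a + b - (evAll τa + evAll τb)
          = (a - evAll τa) + (b - evAll τb) by abel]
        exact N.add_mem h1a h1b
      · rw [mul_add, map_add, show (1 - T 1 : B) * τa + (1 - T 1 : B) * τb - (mark σa + mark σb)
          = ((1 - T 1 : B) * τa - mark σa) + ((1 - T 1 : B) * τb - mark σb) by abel]
        exact (coeffIdeal N).add_mem h2a h2b)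
    (by
      rintro a ⟨τa, σa, hσa, h1a, h2a⟩
      refine ⟨-τa, -σa, N.neg_mem hσa, ?_, ?_⟩
      · rw [map_neg, show -a - -(evAll τa) = -(a - evAll τa) by abel]
        exact N.neg_mem h1a
      · rw [map_neg, show (1 - T 1 : B) * -τa = -((1 - T 1 : B) * τa) from mul_neg'' _ _,
          show -((1 - T 1 : B) * τa) - -(mark σa) = -((1 - T 1 : B) * τa - mark σa) by abel]
        exact (coeffIdeal N).neg_mem h2a)
    (by
      rintro x y ⟨τ, σ, hσ, h1, h2⟩
      refine ⟨mark x * τ, x * σ, N.mul_mem_left _ _ hσ, ?_, ?_⟩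
      · rw [map_mul, evAll_mark, ← mul_sub]
        exact N.mul_mem_left _ _ h1
      · rw [← mul_assoc, (one_sub_T_central (mark x)).eq, mul_assoc, map_mul, ← mul_sub]
        exact (coeffIdeal N).mul_mem_left _ _ h2)
    (by
      rintro x y ⟨τ, σ, hσ, h1, h2⟩
      refine ⟨τ * mark y, σ * y, N.mul_mem_right _ _ hσ, ?_, ?_⟩
      · rw [map_mul, evAll_mark, ← sub_mul]
        exact N.mul_mem_right _ _ h1
      · rw [← mul_assoc, map_mul, ← sub_mul]
        exact (coeffIdeal N).mul_mem_right _ _ h2)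

theorem mem_pivotIdeal {N : TwoSidedIdeal A} {x : A} :
    x ∈ pivotIdeal N ↔ ∃ τ : B, ∃ σ : A, σ ∈ N ∧ x - evAll τ ∈ N ∧
      (1 - T 1 : B) * τ - mark σ ∈ coeffIdeal N :=
  TwoSidedIdeal.mem_mk' _ _ _ _ _ _ _

theorem pivotIdeal_isNil {N : TwoSidedIdeal A} (hN : N.IsNil) : (pivotIdeal N).IsNil := by
  intro x hx
  rw [mem_pivotIdeal] at hx
  obtain ⟨τ, σ, hσ, h1, h2⟩ := hx
  obtain ⟨M, hM⟩ := hN σ hσ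
  have hM1 : σ ^ (M + 1) = 0 := by rw [pow_succ, hM, zero_mul]
  have p1 : ((1 - T 1 : B) * τ) ^ (M + 1) - (mark σ) ^ (M + 1) ∈ coeffIdeal N :=
    (coeffIdeal N).pow_sub_pow_mem h2 (M + 1)
  have p2 : (mark σ) ^ (M + 1) = 0 := by rw [← map_pow, hM1, map_zero]
  rw [p2, sub_zero, (one_sub_T_central τ).mul_pow] at p1
  have p3 : τ ^ (M + 1) ∈ coeffIdeal N := mem_coeffIdeal_of_pow_one_sub_T_mul (M + 1) p1
  have p4 : (evAll τ) ^ (M + 1) ∈ N := by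
    rw [← map_pow]
    exact evAll_mem_of_mem_coeffIdeal p3
  have p5 : x ^ (M + 1) ∈ N := N.mem_of_sub_mem (N.pow_sub_pow_mem h1 (M + 1)) p4
  obtain ⟨ρ, hρ⟩ := hN _ p5
  exact ⟨(M + 1) * ρ, by rw [pow_mul, hρ]⟩

theorem gderiv_mem_pivotIdeal {N : TwoSidedIdeal A} {g : A} (hg : g ∈ N) (s : ℤ) :
    gderiv g s ∈ pivotIdeal N := by
  rw [mem_pivotIdeal]
  refine ⟨tau g s, g, hg, ?_, pivot_key g hg s⟩
  rw [evAll_tau, sub_self]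
  exact N.zero_mem

end Laurent4

section Laurent5

variable {R : Type*} [Ring R]

local notation "A" => LaurentPolynomial R
local notation "B" => LaurentPolynomial (LaurentPolynomial R)

theorem finset_sum_apply'' {ι : Type*} (S : Finset ι) (F : ι → A) (k : ℤ) :
    (∑ n ∈ S, F n).coeff k = ∑ n ∈ S, (F n).coeff k := by
  classical
  induction S using Finset.induction_on with
  | empty => simp
  | @insert a s ha ih =>
    rw [Finset.sum_insert ha, Finset.sum_insert ha, ← ih]
    rfl

theorem single_coeff_sum {ι : Type*} (S : Finset ι) (F : ι → R) (j : ℤ) :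
    (sg j (∑ a ∈ S, F a) : A) = ∑ a ∈ S, (sg j (F a) : A) := by
  classical
  induction S using Finset.induction_on with
  | empty =>
    show (sg j (0 : R) : A) = 0
    exact AddMonoidAlgebra.single_zero j
  | @insert a s ha ih =>
    rw [Finset.sum_insert ha, Finset.sum_insert ha, AddMonoidAlgebra.single_add, ih]

/-- The stretching endomorphism `T ↦ T^d`. -/
noncomputable def stretch (d : ℤ) : LaurentPolynomial R →+* LaurentPolynomial R :=
  AddMonoidAlgebra.mapDomainRingHom R (AddMonoidHom.mulLeft d)

theorem stretch_single (d n : ℤ) (r : R) :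
    stretch d (sg n r : A) = sg (d * n) r := by
  show AddMonoidAlgebra.mapDomain _ _ = _
  rw [AddMonoidAlgebra.mapDomain_single]
  rfl

theorem stretch_eq_zero {d : ℤ} (hd : d ≠ 0) {x : A} (h : stretch d x = 0) : x = 0 := by
  have : Function.Injective (fun n : ℤ => d * n) := mul_right_injective₀ hd
  have h2 : AddMonoidAlgebra.mapDomain (fun n : ℤ => d * n) x = 0 := h
  have := AddMonoidAlgebra.mapDomain_injective this (R := R)
  apply this
  rw [h2, AddMonoidAlgebra.mapDomain_zero]

/-- Pullback of a two-sided ideal along `stretch d`. -/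
noncomputable def stretchComap (d : ℤ) (N : TwoSidedIdeal (LaurentPolynomial R)) :
    TwoSidedIdeal (LaurentPolynomial R) :=
  TwoSidedIdeal.mk' {x : A | stretch d x ∈ N}
    (by show stretch d 0 ∈ N; rw [map_zero]; exact N.zero_mem)
    (fun {a b} ha hb => by
      show stretch d (a + b) ∈ N
      rw [map_add]; exact N.add_mem ha hb)
    (fun {a} ha => by
      show stretch d (-a) ∈ N
      rw [map_neg]; exact N.neg_mem ha)
    (fun {x y} hy => by
      show stretch d (x * y) ∈ N
      rw [map_mul]; exact N.mul_mem_left _ _ hy)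
    (fun {x y} hx => by
      show stretch d (x * y) ∈ N
      rw [map_mul]; exact N.mul_mem_right _ _ hx)

theorem mem_stretchComap {d : ℤ} {N : TwoSidedIdeal (LaurentPolynomial R)} {x : A} :
    x ∈ stretchComap d N ↔ stretch d x ∈ N :=
  TwoSidedIdeal.mem_mk' _ _ _ _ _ _ _

theorem stretchComap_isNil {d : ℤ} (hd : d ≠ 0) {N : TwoSidedIdeal (LaurentPolynomial R)}
    (hN : N.IsNil) : (stretchComap d N).IsNil := by
  intro x hx
  rw [mem_stretchComap] at hx
  obtain ⟨M, hM⟩ := hN _ hx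
  refine ⟨M, stretch_eq_zero hd ?_⟩
  rw [map_pow, hM]

end Laurent5

section Laurent6

variable {R : Type*} [Ring R]

local notation "A" => LaurentPolynomial R
local notation "B" => LaurentPolynomial (LaurentPolynomial R)

theorem claim (w : ℕ) : ∀ (N : TwoSidedIdeal (LaurentPolynomial R)), N.IsNil →
    ∀ g : A, g ∈ N → g.coeff.support.card ≤ w →
    ∀ i : ℤ, (sg i (g.coeff i) : A) ∈ nilRad (LaurentPolynomial R) := by
  induction w using Nat.strong_induction_on with
  | _ w IH =>
  intro N hN g hg hcard i
  by_cases hgi : g.coeff i = 0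
  · rw [hgi, AddMonoidAlgebra.single_zero]
    exact (nilRad (LaurentPolynomial R)).zero_mem
  have hi : i ∈ g.coeff.support := Finsupp.mem_support_iff.2 hgi
  by_cases hone : g.coeff.support.card ≤ 1
  · -- `g` is the single monomial `sg i (g i)`.
    have hgeq : g = (sg i (g.coeff i) : A) := by
      ext m
      by_cases hm : i = m
      · subst hm
        rw [AddMonoidAlgebra.coeff_single, Finsupp.single_eq_same]
      · rw [AddMonoidAlgebra.coeff_single, Finsupp.single_eq_of_ne' hm]
        by_contra hgm
        have hm' : m ∈ g.coeff.support := Finsupp.mem_support_iff.2 hgm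
        exact hm (Finset.card_le_one.1 hone i hi m hm')
    rw [← hgeq]
    exact le_sSup (show N ∈ {I : TwoSidedIdeal (LaurentPolynomial R) | I.IsNil} from hN) hg
  -- main case: at least two monomials
  push_neg at hone
  have hw2 : 2 ≤ w := le_trans hone hcard
  -- the gcd `d` of the shifted support
  set Sgen : Set ℤ := ((g.coeff.support.image (fun n => n - i) : Finset ℤ) : Set ℤ) with hSgen
  obtain ⟨d, hd⟩ := Int.subgroup_cyclic (AddSubgroup.closure Sgen)
  have hdvd : ∀ n ∈ g.coeff.support, d ∣ (n - i) := by
    intro n hn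
    have h1 : (n - i) ∈ AddSubgroup.closure Sgen := by
      apply AddSubgroup.subset_closure
      exact Finset.mem_coe.2 (Finset.mem_image_of_mem _ hn)
    rw [hd, AddSubgroup.mem_closure_singleton] at h1
    obtain ⟨k, hk⟩ := h1
    rw [← hk, zsmul_eq_mul, Int.cast_id]
    exact dvd_mul_left d k
  have hd0 : d ≠ 0 := by
    intro h0
    apply hone.not_ge
    -- all of the support equals {i}
    have hsub : g.coeff.support ⊆ {i} := by
      intro n hn
      have hz := hdvd n hn
      rw [h0, zero_dvd_iff] at hz
      rw [Finset.mem_singleton]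
      omega
    calc g.coeff.support.card ≤ ({i} : Finset ℤ).card := Finset.card_le_card hsub
      _ = 1 := Finset.card_singleton i
  -- the compressed element
  set h : A := ∑ n ∈ g.coeff.support, (sg ((n - i) / d) (g.coeff n) : A) with hh
  have hstretch : stretch d h = g * T (-i) := by
    rw [hh, map_sum]
    have e1 : ∀ n ∈ g.coeff.support, stretch d (sg ((n - i) / d) (g.coeff n) : A) = (sg (n - i) (g.coeff n) : A) := by
      intro n hn
      rw [stretch_single, Int.mul_ediv_cancel' (hdvd n hn)]
    rw [Finset.sum_congr rfl e1]
    conv_rhs => rw [← sum_single_support g, Finset.sum_mul]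
    refine Finset.sum_congr rfl (fun n hn => ?_)
    show (sg (n - i) (g.coeff n) : A) = _ * (sg (-i) (1 : R) : A)
    rw [AddMonoidAlgebra.single_mul_single, mul_one, sub_eq_add_neg]
  have hinj : ∀ n ∈ g.coeff.support, ∀ n' ∈ g.coeff.support, (n - i) / d = (n' - i) / d → n = n' := by
    intro n hn n' hn' he
    have e1 := Int.mul_ediv_cancel' (hdvd n hn)
    have e2 := Int.mul_ediv_cancel' (hdvd n' hn')
    have : n - i = n' - i := by rw [← e1, ← e2, he]
    omega
  have happly : ∀ n ∈ g.coeff.support, h.coeff ((n - i) / d) = g.coeff n := by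
    intro n hn
    rw [hh, finset_sum_apply'']
    rw [Finset.sum_eq_single_of_mem n hn]
    · rw [AddMonoidAlgebra.coeff_single, Finsupp.single_eq_same]
    · intro b hb hbn
      apply Finsupp.single_eq_of_ne'
      intro hcontra
      exact hbn (hinj b hb n hn hcontra)
  have hsupp : h.coeff.support = g.coeff.support.image (fun n => (n - i) / d) := by
    ext m
    constructor
    · intro hm
      rw [Finsupp.mem_support_iff] at hm
      by_contra hmem
      apply hm
      rw [hh, finset_sum_apply'']
      apply Finset.sum_eq_zero
      intro n hn
      apply Finsupp.single_eq_of_ne'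
      intro hcontra
      exact hmem (Finset.mem_image.2 ⟨n, hn, hcontra⟩)
    · intro hm
      obtain ⟨n, hn, rfl⟩ := Finset.mem_image.1 hm
      rw [Finsupp.mem_support_iff, happly n hn]
      exact Finsupp.mem_support_iff.1 hn
  have hcardh : h.coeff.support.card ≤ w := by
    rw [hsupp]
    exact le_trans (Finset.card_image_le) hcard
  have h0val : h.coeff 0 = g.coeff i := by
    have := happly i hi
    rwa [sub_self, Int.zero_ediv] at this
  -- h lies in the nil ideal `stretchComap d N`
  have hmemh : h ∈ stretchComap d N := by
    rw [mem_stretchComap, hstretch]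
    exact N.mul_mem_right _ _ hg
  have hNil' : (stretchComap d N).IsNil := stretchComap_isNil hd0 hN
  -- pivot step: for every s in the support of h, `s ∈ Z`
  have key : ∀ s ∈ h.coeff.support,
      (sg (0:ℤ) (h.coeff 0 * ((s : ℤ) : R)) : A) ∈ nilRad (LaurentPolynomial R) := by
    intro s hs
    have hpiv : gderiv h s ∈ pivotIdeal (stretchComap d N) := gderiv_mem_pivotIdeal hmemh s
    have hnilpiv : (pivotIdeal (stretchComap d N)).IsNil := pivotIdeal_isNil hNil'
    have hcard' : (gderiv h s).coeff.support.card ≤ w - 1 := by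
      have c1 : (gderiv h s).coeff.support.card ≤ (h.coeff.support.erase s).card :=
        Finset.card_le_card (gderiv_support h s)
      have c2 : (h.coeff.support.erase s).card = h.coeff.support.card - 1 :=
        Finset.card_erase_of_mem hs
      omega
    have := IH (w - 1) (by omega) (pivotIdeal (stretchComap d N)) hnilpiv
      (gderiv h s) hpiv hcard' 0
    rwa [gderiv_apply, sub_zero] at this
  -- the subgroup of `c` such that `sg 0 (h 0 * c)` lies in the nil radical
  set Z : AddSubgroup ℤ :=
    { carrier := {c : ℤ | (sg (0:ℤ) (h.coeff 0 * ((c : ℤ) : R)) : A) ∈ nilRad (LaurentPolynomial R)}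
      zero_mem' := by
        simp only [Set.mem_setOf_eq]
        rw [Int.cast_zero, mul_zero, AddMonoidAlgebra.single_zero]
        exact (nilRad (LaurentPolynomial R)).zero_mem
      add_mem' := by
        intro a b ha hb
        simp only [Set.mem_setOf_eq] at ha hb ⊢
        rw [Int.cast_add, mul_add, AddMonoidAlgebra.single_add]
        exact (nilRad (LaurentPolynomial R)).add_mem ha hb
      neg_mem' := by
        intro a ha
        simp only [Set.mem_setOf_eq] at ha ⊢
        rw [Int.cast_neg, mul_neg,
          show (sg (0:ℤ) (-(h.coeff 0 * ((a : ℤ) : R))) : A)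
            = -(sg (0:ℤ) (h.coeff 0 * ((a : ℤ) : R)) : A) from AddMonoidAlgebra.single_neg _ _]
        exact (nilRad (LaurentPolynomial R)).neg_mem ha } with hZdef
  have hZ : AddSubgroup.closure ((h.coeff.support : Finset ℤ) : Set ℤ) ≤ Z :=
    (AddSubgroup.closure_le Z).2 (fun s hs => key s (Finset.mem_coe.1 hs))
  set φ : ℤ →+ ℤ := AddMonoidHom.mulLeft d with hφdef
  have himg : (AddSubgroup.closure ((h.coeff.support : Finset ℤ) : Set ℤ)).map φ
      = AddSubgroup.closure Sgen := by
    rw [AddMonoidHom.map_closure]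
    congr 1
    rw [hsupp, hSgen]
    ext x
    simp only [Set.mem_image, Finset.coe_image, Finset.mem_coe, Finset.mem_image]
    constructor
    · rintro ⟨m, ⟨n, hn, rfl⟩, rfl⟩
      refine ⟨n, hn, ?_⟩
      show n - i = d * ((n - i) / d)
      exact (Int.mul_ediv_cancel' (hdvd n hn)).symm
    · rintro ⟨n, hn, rfl⟩
      refine ⟨(n - i) / d, ⟨n, hn, rfl⟩, ?_⟩
      show d * ((n - i) / d) = n - i
      exact Int.mul_ediv_cancel' (hdvd n hn)
  have hd_in : d ∈ (AddSubgroup.closure ((h.coeff.support : Finset ℤ) : Set ℤ)).map φ := by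
    rw [himg, hd]
    exact AddSubgroup.subset_closure rfl
  obtain ⟨c, hc, hdc⟩ := AddSubgroup.mem_map.1 hd_in
  have hc1 : c = 1 := by
    have e : d * c = d * 1 := by
      rw [mul_one]
      exact hdc
    exact mul_left_cancel₀ hd0 e
  rw [hc1] at hc
  have hfin' : (sg (0:ℤ) (h.coeff 0 * ((1 : ℤ) : R)) : A) ∈ nilRad (LaurentPolynomial R) := hZ hc
  rw [Int.cast_one, mul_one, h0val] at hfin'
  have etrans : (sg i (g.coeff i) : A) = (sg (0:ℤ) (g.coeff i) : A) * T i := by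
    show _ = _ * (sg i (1 : R) : A)
    rw [AddMonoidAlgebra.single_mul_single, zero_add, mul_one]
  rw [etrans]
  exact (nilRad (LaurentPolynomial R)).mul_mem_right _ _ hfin'

end Laurent6

section Laurent7

variable {R : Type*} [Ring R]

local notation "A" => LaurentPolynomial R

theorem K_mul_left (x y : A)
    (hy : ∀ j : ℤ, (sg j (y.coeff j) : A) ∈ nilRad (LaurentPolynomial R)) (i : ℤ) :
    (sg i ((x * y).coeff i) : A) ∈ nilRad (LaurentPolynomial R) := by
  classical
  have e : x * y = ∑ a ∈ x.coeff.support, (sg a (x.coeff a) : A) * y := by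
    conv_lhs => rw [← sum_single_support x]
    rw [Finset.sum_mul]
  rw [e, finset_sum_apply'', single_coeff_sum]
  refine (nilRad (LaurentPolynomial R)).finsetSum_mem _ _ (fun a _ => ?_)
  rw [AddMonoidAlgebra.coeff_single_mul_apply]
  have e2 : (sg i (x.coeff a * y.coeff (-a + i)) : A) = (sg a (x.coeff a) : A) * (sg (-a + i) (y.coeff (-a + i)) : A) := by
    rw [AddMonoidAlgebra.single_mul_single]
    congr 1
    ring
  rw [e2]
  exact (nilRad (LaurentPolynomial R)).mul_mem_left _ _ (hy _)

theorem K_mul_right (x y : A)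
    (hy : ∀ j : ℤ, (sg j (y.coeff j) : A) ∈ nilRad (LaurentPolynomial R)) (i : ℤ) :
    (sg i ((y * x).coeff i) : A) ∈ nilRad (LaurentPolynomial R) := by
  classical
  have e : y * x = ∑ a ∈ x.coeff.support, y * (sg a (x.coeff a) : A) := by
    conv_lhs => rw [← sum_single_support x]
    rw [Finset.mul_sum]
  rw [e, finset_sum_apply'', single_coeff_sum]
  refine (nilRad (LaurentPolynomial R)).finsetSum_mem _ _ (fun a _ => ?_)
  rw [AddMonoidAlgebra.coeff_mul_single_apply, ← sub_eq_add_neg]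
  have e2 : (sg i (y.coeff (i - a) * x.coeff a) : A) = (sg (i - a) (y.coeff (i - a)) : A) * (sg a (x.coeff a) : A) := by
    rw [AddMonoidAlgebra.single_mul_single]
    congr 1
    ring
  rw [e2]
  exact (nilRad (LaurentPolynomial R)).mul_mem_right _ _ (hy _)

end Laurent7

/-- **The nil radical of a Laurent polynomial ring is homogeneous** (with respect to the
`ℤ`-grading with `x` in degree `1` and coefficients in degree `0`): if a Laurent polynomial
`f = ∑ᵢ rᵢ xⁱ` lies in the nil radical of `R[x,x⁻¹]`, then so does each monomial `rᵢ xⁱ`. -/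
theorem nilRad_laurent_homogeneous {R : Type*} [Ring R] (f : LaurentPolynomial R)
    (hf : f ∈ nilRad (LaurentPolynomial R)) (i : ℤ) :
    LaurentPolynomial.C (f.coeff i) * LaurentPolynomial.T i ∈ nilRad (LaurentPolynomial R) := by
  classical
  rw [← LaurentPolynomial.single_eq_C_mul_T]
  set K : TwoSidedIdeal (LaurentPolynomial R) := TwoSidedIdeal.mk'
    {g : LaurentPolynomial R | ∀ j : ℤ, (sg j (g.coeff j) : LaurentPolynomial R)
      ∈ nilRad (LaurentPolynomial R)}
    (fun j => by
      rw [show ((0 : LaurentPolynomial R).coeff j) = 0 from rfl, AddMonoidAlgebra.single_zero]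
      exact (nilRad (LaurentPolynomial R)).zero_mem)
    (fun {a b} ha hb j => by
      rw [show ((a + b).coeff j) = a.coeff j + b.coeff j from rfl, AddMonoidAlgebra.single_add]
      exact (nilRad (LaurentPolynomial R)).add_mem (ha j) (hb j))
    (fun {a} ha j => by
      rw [show ((-a).coeff j) = -(a.coeff j) from rfl,
        show (sg j (-(a.coeff j)) : LaurentPolynomial R) = -(sg j (a.coeff j) : LaurentPolynomial R) from
          AddMonoidAlgebra.single_neg _ _]
      exact (nilRad (LaurentPolynomial R)).neg_mem (ha j))
    (fun {x y} hy j => K_mul_left x y hy j)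
    (fun {x y} hx j => K_mul_right y x hx j)
    with hK
  have hle : nilRad (LaurentPolynomial R) ≤ K := by
    refine sSup_le (fun N hN => ?_)
    rw [TwoSidedIdeal.le_iff]
    intro g hg
    rw [SetLike.mem_coe, hK, TwoSidedIdeal.mem_mk']
    exact fun j => claim g.coeff.support.card N hN g hg le_rfl j
  have hfK : f ∈ K := hle hf
  rw [hK, TwoSidedIdeal.mem_mk'] at hfK
  exact hfK i
end

section
/- For every ring R, the nil radical N(R[x]) of the polynomial ring R[x] equals I[x] for some nil ideal I of R; that is, there is a nil ideal I of R such that a polynomial lies in the nil radical of R[x] if and only if all of its coefficients lie in I. -/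
open Polynomial

namespace AmitsurAux

section Infra

variable {A B : Type*} [Ring A] [Ring B]

/-- Image of a two-sided ideal under a surjective ring hom. -/
def idealMap (f : A →+* B) (hf : Function.Surjective f) (I : TwoSidedIdeal A) :
    TwoSidedIdeal B :=
  TwoSidedIdeal.mk' (f '' I)
    ⟨0, I.zero_mem, map_zero f⟩
    (by rintro _ _ ⟨x, hx, rfl⟩ ⟨y, hy, rfl⟩
        exact ⟨x + y, I.add_mem hx hy, map_add f x y⟩)
    (by rintro _ ⟨x, hx, rfl⟩; exact ⟨-x, I.neg_mem hx, map_neg f x⟩)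
    (by rintro r _ ⟨y, hy, rfl⟩
        obtain ⟨s, rfl⟩ := hf r
        exact ⟨s * y, I.mul_mem_left s y hy, map_mul f s y⟩)
    (by rintro _ r ⟨x, hx, rfl⟩
        obtain ⟨s, rfl⟩ := hf r
        exact ⟨x * s, I.mul_mem_right x s hx, map_mul f x s⟩)

lemma mem_idealMap (f : A →+* B) (hf : Function.Surjective f) (I : TwoSidedIdeal A) {b : B} :
    b ∈ idealMap f hf I ↔ ∃ a ∈ I, f a = b := by
  simp only [idealMap, TwoSidedIdeal.mem_mk', Set.mem_image, SetLike.mem_coe]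
  exact (TwoSidedIdeal.mem_mk' _ _ _ _ _ _ b).trans (by simp only [Set.mem_image, SetLike.mem_coe])

lemma isNil_idealMap (f : A →+* B) (hf : Function.Surjective f) {I : TwoSidedIdeal A}
    (hI : I.IsNil) : (idealMap f hf I).IsNil := by
  intro b hb
  obtain ⟨a, ha, rfl⟩ := (mem_idealMap f hf I).1 hb
  obtain ⟨k, hk⟩ := hI a ha
  exact ⟨k, by rw [← map_pow, hk, map_zero]⟩

lemma mk'_surjective (I : TwoSidedIdeal A) : Function.Surjective I.ringCon.mk' :=
  fun y => Quotient.inductionOn' y fun x => ⟨x, rfl⟩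

lemma mk'_eq_zero_iff (I : TwoSidedIdeal A) (x : A) : I.ringCon.mk' x = 0 ↔ x ∈ I := by
  rw [TwoSidedIdeal.mem_iff]
  exact RingCon.eq I.ringCon (b := 0)

lemma isNil_sup {I J : TwoSidedIdeal A} (hI : I.IsNil) (hJ : J.IsNil) : (I ⊔ J).IsNil := by
  set π := I.ringCon.mk' with hπdef
  have hπ : Function.Surjective π := mk'_surjective I
  set J' := idealMap π hπ J with hJ'def
  set K := TwoSidedIdeal.comap π J' with hKdef
  have hIK : I ≤ K := by
    intro x hx
    rw [hKdef, TwoSidedIdeal.mem_comap]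
    have : π x = 0 := (mk'_eq_zero_iff I x).2 hx
    rw [this]
    exact J'.zero_mem
  have hJK : J ≤ K := by
    intro x hx
    rw [hKdef, TwoSidedIdeal.mem_comap]
    exact (mem_idealMap π hπ J).2 ⟨x, hx, rfl⟩
  intro x hx
  have hxK : x ∈ K := sup_le hIK hJK hx
  rw [hKdef, TwoSidedIdeal.mem_comap] at hxK
  obtain ⟨a, haJ, ha⟩ := (mem_idealMap π hπ J).1 hxK
  obtain ⟨k, hk⟩ := hJ a haJ
  have h1 : π (x ^ k) = 0 := by rw [map_pow, ← ha, ← map_pow, hk, map_zero]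
  have h2 : x ^ k ∈ I := (mk'_eq_zero_iff I _).1 h1
  obtain ⟨l, hl⟩ := hI _ h2
  exact ⟨k * l, by rw [pow_mul, hl]⟩

lemma mem_nilRad_of_isNil {I : TwoSidedIdeal A} (hI : I.IsNil) {x : A} (hx : x ∈ I) :
    x ∈ nilRad A :=
  (le_sSup (show I ∈ {I : TwoSidedIdeal A | I.IsNil} from hI)) hx

lemma nilRad_isNil (A : Type*) [Ring A] : (nilRad A).IsNil := by
  set T := TwoSidedIdeal.mk' {x : A | ∃ J : TwoSidedIdeal A, J.IsNil ∧ x ∈ J}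
    ⟨⊥, fun x hx => by rw [TwoSidedIdeal.mem_bot] at hx; simp [hx], TwoSidedIdeal.zero_mem _⟩
    (by rintro x y ⟨J1, hJ1, hx⟩ ⟨J2, hJ2, hy⟩
        exact ⟨J1 ⊔ J2, isNil_sup hJ1 hJ2,
          TwoSidedIdeal.add_mem _ (le_sup_left (a := J1) (b := J2) hx)
            (le_sup_right (a := J1) (b := J2) hy)⟩)
    (by rintro x ⟨J, hJ, hx⟩; exact ⟨J, hJ, J.neg_mem hx⟩)
    (by rintro r x ⟨J, hJ, hx⟩; exact ⟨J, hJ, J.mul_mem_left r x hx⟩)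
    (by rintro x r ⟨J, hJ, hx⟩; exact ⟨J, hJ, J.mul_mem_right x r hx⟩)
    with hTdef
  have hle : nilRad A ≤ T := by
    apply sSup_le
    intro J hJ x hx
    rw [hTdef, TwoSidedIdeal.mem_mk']
    exact ⟨J, hJ, hx⟩
  intro x hx
  have : x ∈ T := hle hx
  rw [hTdef, TwoSidedIdeal.mem_mk'] at this
  obtain ⟨J, hJ, hxJ⟩ := this
  exact hJ x hxJ

lemma isNil_comap (f : A →+* B) (J : TwoSidedIdeal B) (hJ : J.IsNil)
    (hker : ∀ x : A, f x = 0 → IsNilpotent x) : (TwoSidedIdeal.comap f J).IsNil := by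
  intro x hx
  rw [TwoSidedIdeal.mem_comap] at hx
  obtain ⟨k, hk⟩ := hJ _ hx
  obtain ⟨l, hl⟩ := hker (x ^ k) (by rw [map_pow, hk])
  exact ⟨k * l, by rw [pow_mul, hl]⟩

/-- A surjective endomorphism maps the nil radical into the nil radical. -/
lemma map_mem_nilRad (f : B →+* B) (hf : Function.Surjective f) {x : B}
    (hx : x ∈ nilRad B) : f x ∈ nilRad B := by
  have h1 : (idealMap f hf (nilRad B)).IsNil := isNil_idealMap f hf (nilRad_isNil B)
  exact mem_nilRad_of_isNil h1 ((mem_idealMap f hf _).2 ⟨x, hx, rfl⟩)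


end Infra

section Tau

variable (S : Type*) [Ring S]

/-- The substitution `x ↦ x + 1` as a ring endomorphism of `S[X]`. -/
noncomputable def tau : S[X] →+* S[X] :=
  eval₂RingHom' C (X + 1) (fun a => ((commute_X (C a)).symm.add_right (Commute.one_right _)))

@[simp] lemma tau_C (a : S) : tau S (C a) = C a := eval₂_C _ _

@[simp] lemma tau_X : tau S (X : S[X]) = X + 1 := eval₂_X _ _

/-- The substitution `x ↦ x - 1`. -/
noncomputable def tauInv : S[X] →+* S[X] :=
  eval₂RingHom' C (X - 1) (fun a => ((commute_X (C a)).symm.sub_right (Commute.one_right _)))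

lemma tau_surjective : Function.Surjective (tau S) := by
  have h : (tau S).comp (tauInv S) = RingHom.id _ := by
    apply ringHom_ext
    · intro a
      simp [tauInv, tau]
    · simp [tauInv, tau]
  intro g
  exact ⟨tauInv S g, by rw [← RingHom.comp_apply, h, RingHom.id_apply]⟩

variable {S}

lemma coeff_add_one_pow (i m : ℕ) : ((X + 1 : S[X]) ^ i).coeff m = (i.choose m : S) := by
  induction i generalizing m with
  | zero =>
    simp only [pow_zero, Nat.choose]
    cases m with
    | zero => simp
    | succ m => simp [coeff_one, Nat.choose]
  | succ i ih =>
    have hexp : (X + 1 : S[X]) ^ (i + 1) = (X + 1) ^ i * X + (X + 1) ^ i := by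
      rw [pow_succ, mul_add, mul_one]
    cases m with
    | zero =>
      rw [hexp, coeff_add, coeff_mul_X_zero, zero_add, ih]
      simp
    | succ m =>
      rw [hexp, coeff_add, coeff_mul_X, ih, ih, Nat.choose_succ_succ', Nat.cast_add]

lemma tau_coeff (f : S[X]) (m : ℕ) :
    (tau S f).coeff m
      = ∑ i ∈ Finset.range (f.natDegree + 1), f.coeff i * (i.choose m : S) := by
  have : tau S f = ∑ i ∈ Finset.range (f.natDegree + 1), C (f.coeff i) * (X + 1) ^ i := by
    show eval₂ C (X+1) f = _
    rw [eval₂_eq_sum_range]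
  rw [this, finset_sum_coeff]
  refine Finset.sum_congr rfl fun i _ => ?_
  rw [coeff_C_mul, coeff_add_one_pow]

lemma tau_coeff_of_le {f : S[X]} {m : ℕ} (h : f.natDegree ≤ m) :
    (tau S f).coeff m = f.coeff m := by
  rw [tau_coeff]
  rcases eq_or_lt_of_le h with heq | hlt
  · subst heq
    rw [Finset.sum_range_succ]
    have h0 : ∑ i ∈ Finset.range f.natDegree, f.coeff i * (i.choose f.natDegree : S) = 0 := by
      apply Finset.sum_eq_zero
      intro i hi
      rw [Finset.mem_range] at hi
      rw [Nat.choose_eq_zero_of_lt hi]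
      simp
    rw [h0, zero_add, Nat.choose_self]
    simp
  · have h0 : ∑ i ∈ Finset.range (f.natDegree + 1), f.coeff i * (i.choose m : S) = 0 := by
      apply Finset.sum_eq_zero
      intro i hi
      rw [Finset.mem_range] at hi
      rw [Nat.choose_eq_zero_of_lt (lt_of_lt_of_le hi hlt)]
      simp
    rw [h0, coeff_eq_zero_of_natDegree_lt hlt]

lemma tau_coeff_pred {f : S[X]} {e : ℕ} (hd : f.natDegree = e + 1) :
    (tau S f).coeff e = f.coeff e + f.coeff (e + 1) * ((e + 1 : ℕ) : S) := by
  rw [tau_coeff, hd]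
  rw [Finset.sum_range_succ, Finset.sum_range_succ]
  have h0 : ∑ i ∈ Finset.range e, f.coeff i * (i.choose e : S) = 0 := by
    apply Finset.sum_eq_zero
    intro i hi
    rw [Finset.mem_range] at hi
    rw [Nat.choose_eq_zero_of_lt hi]
    simp
  rw [h0, zero_add, Nat.choose_self, Nat.choose_succ_self_right]
  simp


end Tau

section Lam

variable {S : Type*} [Ring S] {p : ℕ}

lemma lam_commute (S : Type*) [Ring S] (p : ℕ) : ∀ q : S[X], Commute q ((X : S[X]) ^ p - X) :=
  fun q => (((commute_X q).symm.pow_right p).sub_right (commute_X q).symm)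

/-- Substitution `x ↦ x^p - x`. -/
noncomputable def Psi (S : Type*) [Ring S] (p : ℕ) : S[X] →+* S[X] :=
  eval₂RingHom' C ((X : S[X]) ^ p - X) (fun a => lam_commute S p (C a))

@[simp] lemma Psi_C (a : S) : Psi S p (C a) = C a := eval₂_C _ _
@[simp] lemma Psi_X : Psi S p (X : S[X]) = (X : S[X]) ^ p - X := eval₂_X _ _

lemma monic_lam (hp : 2 ≤ p) : ((X : S[X]) ^ p - X).Monic := by
  nontriviality S
  have h1 : (X : S[X]).degree < (p : ℕ) := by
    rw [degree_X]
    exact_mod_cast Nat.lt_of_lt_of_le one_lt_two hp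
  exact monic_X_pow_sub h1

lemma natDegree_lam [Nontrivial S] (hp : 2 ≤ p) : ((X : S[X]) ^ p - X).natDegree = p := by
  have := natDegree_sub_eq_left_of_natDegree_lt
    (p := (X : S[X]) ^ p) (q := (X : S[X])) ?_
  · rwa [natDegree_X_pow] at this
  · rw [natDegree_X_pow, natDegree_X]
    omega

lemma natDegree_lam_pow [Nontrivial S] (hp : 2 ≤ p) (e : ℕ) :
    (((X : S[X]) ^ p - X) ^ e).natDegree = e * p := by
  rw [(monic_lam (S := S) hp).natDegree_pow, natDegree_lam hp]

lemma coeff_lam_pow_top (hp : 2 ≤ p) (e : ℕ) :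
    (((X : S[X]) ^ p - X) ^ e).coeff (e * p) = 1 := by
  nontriviality S
  have := ((monic_lam (S := S) hp).pow e).coeff_natDegree
  rwa [natDegree_lam_pow hp] at this

lemma coeff_lam_pow_zero {m e : ℕ} (hp : 2 ≤ p) (hm : e * p < m) :
    (((X : S[X]) ^ p - X) ^ e).coeff m = 0 := by
  nontriviality S
  apply coeff_eq_zero_of_natDegree_lt
  calc (((X : S[X]) ^ p - X) ^ e).natDegree
      ≤ e * ((X : S[X]) ^ p - X).natDegree := natDegree_pow_le
    _ ≤ e * p := by
        apply Nat.mul_le_mul_left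
        refine (natDegree_sub_le _ _).trans ?_
        rw [natDegree_X_pow, natDegree_X]
        omega
    _ < m := hm

end Lam

section Transport

lemma mapRingHom_comp_tau {A B : Type*} [Ring A] [Ring B] (f : A →+* B) :
    (mapRingHom f).comp (tau A) = (tau B).comp (mapRingHom f) := by
  apply ringHom_ext
  · intro a
    simp [coe_mapRingHom]
  · simp [coe_mapRingHom]

variable {S : Type*} [Ring S] {p : ℕ}

lemma dvd_coeff_tau_lam_sub (pp : p.Prime) (e m : ℕ) :
    (p : ℤ) ∣ (tau ℤ (((X : ℤ[X]) ^ p - X) ^ e) - ((X : ℤ[X]) ^ p - X) ^ e).coeff m := by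
  haveI : Fact p.Prime := ⟨pp⟩
  set ψ := mapRingHom (Int.castRingHom (ZMod p)) with hψ
  have hmain : ψ (tau ℤ (((X : ℤ[X]) ^ p - X) ^ e) - ((X : ℤ[X]) ^ p - X) ^ e) = 0 := by
    rw [map_sub]
    have h1 : ψ (tau ℤ (((X : ℤ[X]) ^ p - X) ^ e))
        = tau (ZMod p) (ψ (((X : ℤ[X]) ^ p - X) ^ e)) :=
      RingHom.congr_fun (mapRingHom_comp_tau (Int.castRingHom (ZMod p))) _
    have h2 : ψ (((X : ℤ[X]) ^ p - X) ^ e) = ((X : (ZMod p)[X]) ^ p - X) ^ e := by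
      rw [hψ]
      simp [coe_mapRingHom]
    rw [h1, h2, map_pow]
    have h3 : tau (ZMod p) ((X : (ZMod p)[X]) ^ p - X) = (X : (ZMod p)[X]) ^ p - X := by
      rw [map_sub, map_pow, tau_X]
      haveI : CharP ((ZMod p)[X]) p :=
        charP_of_injective_ringHom (Polynomial.C_injective (R := ZMod p)) p
      rw [add_pow_char]
      rw [one_pow]
      ring
    rw [h3]
    exact sub_self _
  have hcoeff := congrArg (fun q => q.coeff m) hmain
  simp only [hψ, coe_mapRingHom, coeff_map, coeff_zero, eq_intCast] at hcoeff
  rwa [ZMod.intCast_zmod_eq_zero_iff_dvd] at hcoeff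

lemma C_mul_tau_lam_pow (pp : p.Prime) {a : S} (ha : p • a = 0) (e : ℕ) :
    C a * tau S (((X : S[X]) ^ p - X) ^ e) = C a * ((X : S[X]) ^ p - X) ^ e := by
  set φ := mapRingHom (Int.castRingHom S) with hφ
  set L : ℤ[X] := ((X : ℤ[X]) ^ p - X) ^ e with hL
  have hφlam : φ L = ((X : S[X]) ^ p - X) ^ e := by
    rw [hφ, hL]
    simp [coe_mapRingHom]
  have hcomm : tau S (φ L) = φ (tau ℤ L) :=
    (RingHom.congr_fun (mapRingHom_comp_tau (Int.castRingHom S)) _).symm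
  have hz : C a * φ (tau ℤ L - L) = 0 := by
    apply Polynomial.ext
    intro m
    rw [coeff_C_mul, coeff_zero]
    have hcm : (φ (tau ℤ L - L)).coeff m = (((tau ℤ L - L).coeff m : ℤ) : S) := by
      rw [hφ, coe_mapRingHom, coeff_map, eq_intCast]
    rw [hcm]
    obtain ⟨z, hzz⟩ := dvd_coeff_tau_lam_sub pp e m
    rw [hzz]
    push_cast
    have h4 : a * (p : S) = 0 := by
      have h5 := ha
      rw [nsmul_eq_mul] at h5
      calc a * (p : S) = (p : S) * a := ((Nat.cast_commute p a).eq).symm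
        _ = 0 := h5
    rw [← mul_assoc, h4, zero_mul]
  have key : C a * φ (tau ℤ L) = C a * φ L := by
    rw [map_sub, mul_sub, sub_eq_zero] at hz
    exact hz
  rw [← hφlam, hcomm, key]


end Transport

section Classify

variable {S : Type*} [Ring S] {p : ℕ}

lemma classify_const (h : S[X]) (h0 : h.natDegree = 0) :
    ∃ g : S[X], Psi S p g = h ∧ p * g.natDegree ≤ h.natDegree := by
  refine ⟨C (h.coeff 0), ?_, ?_⟩
  · rw [Psi_C, ← eq_C_of_natDegree_le_zero h0.le]
  · simp [natDegree_C]

theorem classify (pp : p.Prime) (d : ℕ) :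
    ∀ h : S[X], h.natDegree ≤ d → (∀ m, p • h.coeff m = 0) → tau S h = h →
      ∃ g : S[X], Psi S p g = h ∧ p * g.natDegree ≤ h.natDegree := by
  induction d with
  | zero =>
    intro h hdeg _ _
    exact classify_const h (Nat.le_zero.mp hdeg)
  | succ d ih =>
    intro h hdeg htors hinv
    by_cases hD : h.natDegree = 0
    · exact classify_const h hD
    · obtain ⟨e, he⟩ : ∃ e, h.natDegree = e + 1 :=
        ⟨h.natDegree - 1, (Nat.succ_pred_eq_of_pos (Nat.pos_of_ne_zero hD)).symm⟩
      set Dn := h.natDegree with hDn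
      set a := h.coeff Dn with ha
      -- the relation a * Dn = 0
      have hrel : a * ((Dn : ℕ) : S) = 0 := by
        have h1 := congrArg (fun q => q.coeff e) hinv
        rw [tau_coeff_pred he] at h1
        have h2 : h.coeff (e + 1) * ((e + 1 : ℕ) : S) = 0 := by
          have := add_eq_left.mp h1
          exact this
        rw [ha, he]
        exact h2
      have hpa : p • a = 0 := htors Dn
      have hap : a * (p : S) = 0 := by
        have h5 := hpa
        rw [nsmul_eq_mul] at h5
        calc a * (p : S) = (p : S) * a := ((Nat.cast_commute p a).eq).symm
          _ = 0 := h5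
      -- p divides Dn
      have hdvd : p ∣ Dn := by
        by_contra hnd
        have hcop : Nat.Coprime p Dn := (Nat.Prime.coprime_iff_not_dvd pp).mpr hnd
        have hbez' : (1 : ℤ) = (p : ℤ) * Nat.gcdA p Dn + (Dn : ℤ) * Nat.gcdB p Dn := by
          have hb := Nat.gcd_eq_gcd_ab p Dn
          rwa [Nat.Coprime.gcd_eq_one hcop, Nat.cast_one] at hb
        have ha0 : a = 0 := by
          have h6 : a * (((p : ℤ) * Nat.gcdA p Dn + (Dn : ℤ) * Nat.gcdB p Dn : ℤ) : S) = a := by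
            rw [← hbez', Int.cast_one, mul_one]
          rw [Int.cast_add, Int.cast_mul, Int.cast_mul, mul_add, Int.cast_natCast,
            Int.cast_natCast, ← mul_assoc, ← mul_assoc, hap, hrel, zero_mul, zero_mul,
            add_zero] at h6
          exact h6.symm
        have : h.leadingCoeff ≠ 0 := leadingCoeff_ne_zero.mpr (fun h0 => hD (by rw [hDn, h0, natDegree_zero]))
        exact this (by rwa [leadingCoeff, ← hDn, ← ha])
      obtain ⟨e', hpe⟩ := hdvd
      have hp2 : 2 ≤ p := pp.two_le
      have he'pos : 1 ≤ e' := by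
        rcases Nat.eq_zero_or_pos e' with h0 | h1
        · exfalso; rw [h0, Nat.mul_zero] at hpe; omega
        · exact h1
      have hpe' : Dn = e' * p := by rw [hpe, Nat.mul_comm]
      set L : S[X] := ((X : S[X]) ^ p - X) ^ e' with hLdef
      set h' := h - C a * L with hh'
      -- coefficients of h' vanish from Dn on
      have f1 : ∀ m, Dn ≤ m → h'.coeff m = 0 := by
        intro m hm
        rcases eq_or_lt_of_le hm with hmeq | hmlt
        · rw [hh', coeff_sub, coeff_C_mul, ← hmeq, hpe', coeff_lam_pow_top hp2, mul_one,
            ha, hpe', sub_self]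
        · rw [hh', coeff_sub, coeff_C_mul, coeff_lam_pow_zero hp2 (by omega : e' * p < m),
            mul_zero, sub_zero, coeff_eq_zero_of_natDegree_lt (by omega)]
      have hdeg' : h'.natDegree ≤ e := by
        apply natDegree_le_iff_coeff_eq_zero.mpr
        intro N hN
        exact f1 N (by omega)
      have f2 : ∀ m, p • h'.coeff m = 0 := by
        intro m
        rw [hh', coeff_sub, coeff_C_mul, smul_sub, htors m, ← smul_mul_assoc, hpa, zero_mul,
          sub_zero]
      have f3 : tau S h' = h' := by
        rw [hh', map_sub, hinv, map_mul, tau_C, C_mul_tau_lam_pow pp hpa e']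
      obtain ⟨g', hg'1, hg'2⟩ := ih h' (by omega) f2 f3
      refine ⟨g' + C a * X ^ e', ?_, ?_⟩
      · rw [map_add, hg'1, map_mul, map_pow, Psi_C, Psi_X, hh', sub_add_cancel]
      · have n1 : (g' + C a * X ^ e').natDegree ≤ max g'.natDegree e' := by
          refine (natDegree_add_le _ _).trans ?_
          exact max_le_max (le_refl _) ((natDegree_C_mul_le _ _).trans (natDegree_X_pow_le e'))
        have n2 : p * (g' + C a * X ^ e').natDegree ≤ p * max g'.natDegree e' :=
          Nat.mul_le_mul_left p n1
        rcases le_total g'.natDegree e' with hc | hc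
        · rw [max_eq_right hc] at n2
          omega
        · rw [max_eq_left hc] at n2
          have : p * g'.natDegree ≤ e := hg'2.trans hdeg'
          omega


end Classify

section Key

variable {S : Type*} [Ring S] {p : ℕ}

lemma Psi_eq_zero (hp2 : 2 ≤ p) {v : S[X]} (hv : Psi S p v = 0) : v = 0 := by
  by_contra hvne
  have htop : (Psi S p v).coeff (v.natDegree * p) = v.leadingCoeff := by
    show (eval₂ C ((X : S[X]) ^ p - X) v).coeff _ = _
    rw [eval₂_eq_sum_range, finset_sum_coeff, Finset.sum_range_succ]
    have h0 : ∑ i ∈ Finset.range v.natDegree,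
        (C (v.coeff i) * ((X : S[X]) ^ p - X) ^ i).coeff (v.natDegree * p) = 0 := by
      apply Finset.sum_eq_zero
      intro i hi
      rw [Finset.mem_range] at hi
      rw [coeff_C_mul, coeff_lam_pow_zero hp2
        (mul_lt_mul_of_pos_right hi (by omega)), mul_zero]
    rw [h0, zero_add, coeff_C_mul, coeff_lam_pow_top hp2, mul_one, leadingCoeff]
  rw [hv, coeff_zero] at htop
  exact (leadingCoeff_ne_zero.mpr hvne) htop.symm

set_option maxHeartbeats 1000000 in
theorem nilRad_poly_eq_bot (S : Type*) [Ring S]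
    (hconst : ∀ c : S, (C c : S[X]) ∈ nilRad (S[X]) → c = 0) :
    ∀ f ∈ nilRad (S[X]), f = 0 := by
  by_contra hcon
  push_neg at hcon
  obtain ⟨f₀, hf₀N, hf₀⟩ := hcon
  have hne : {m | ∃ f : S[X], f ∈ nilRad (S[X]) ∧ f ≠ 0 ∧ f.natDegree = m}.Nonempty :=
    ⟨f₀.natDegree, f₀, hf₀N, hf₀, rfl⟩
  obtain ⟨n, hn⟩ : ∃ n, n = sInf {m | ∃ f : S[X], f ∈ nilRad (S[X]) ∧ f ≠ 0 ∧ f.natDegree = m} :=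
    ⟨_, rfl⟩
  obtain ⟨f, hfN, hfne, hfd⟩ : ∃ f : S[X], f ∈ nilRad (S[X]) ∧ f ≠ 0 ∧ f.natDegree = n := by
    rw [hn]; simpa using Nat.sInf_mem hne
  have hmin : ∀ g : S[X], g ∈ nilRad (S[X]) → g ≠ 0 → n ≤ g.natDegree := fun g hg hgne =>
    hn ▸ Nat.sInf_le ⟨g, hg, hgne, rfl⟩
  have min_deg : ∀ g : S[X], g ∈ nilRad (S[X]) → (∀ m, n ≤ m → g.coeff m = 0) → g = 0 := by
    intro g hg hco
    by_contra hgne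
    exact (leadingCoeff_ne_zero.mpr hgne) (hco g.natDegree (hmin g hg hgne))
  have hn1 : 1 ≤ n := by
    rcases Nat.eq_zero_or_pos n with h0 | h1
    · exfalso
      rw [h0] at hfd
      have hCf : f = C (f.coeff 0) := eq_C_of_natDegree_le_zero hfd.le
      have hc := hconst (f.coeff 0) (hCf ▸ hfN)
      exact hfne (by rw [hCf, hc, map_zero])
    · exact h1
  have hinv : tau S f = f := by
    have hτf : tau S f ∈ nilRad (S[X]) := map_mem_nilRad _ (tau_surjective S) hfN
    have hsub : tau S f - f ∈ nilRad (S[X]) := TwoSidedIdeal.sub_mem _ hτf hfN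
    have h0 : tau S f - f = 0 := by
      apply min_deg _ hsub
      intro m hm
      rw [coeff_sub, tau_coeff_of_le (le_trans hfd.le hm), sub_self]
    exact sub_eq_zero.mp h0
  obtain ⟨e, he⟩ : ∃ e, f.natDegree = e + 1 := ⟨n - 1, by omega⟩
  have hrel : f.coeff n * ((n : ℕ) : S) = 0 := by
    have h1 := congrArg (fun q => q.coeff e) hinv
    rw [tau_coeff_pred he] at h1
    have h2 := add_eq_left.mp h1
    rw [← hfd, he]
    exact h2
  have hnf : n • f = 0 := by
    apply min_deg _ (TwoSidedIdeal.nsmul_mem _ n hfN)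
    intro m hm
    rw [coeff_smul]
    rcases eq_or_lt_of_le hm with hmeq | hmlt
    · rw [← hmeq, nsmul_eq_mul, (Nat.cast_commute n (f.coeff n)).eq, hrel]
    · rw [coeff_eq_zero_of_natDegree_lt (by omega), smul_zero]
  have hTne : {t : ℕ | 0 < t ∧ t • f = 0}.Nonempty := ⟨n, by omega, hnf⟩
  obtain ⟨t, ht⟩ : ∃ t, t = sInf {t : ℕ | 0 < t ∧ t • f = 0} := ⟨_, rfl⟩
  obtain ⟨htpos, htf⟩ : 0 < t ∧ t • f = 0 := by rw [ht]; exact Nat.sInf_mem hTne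
  have htmin : ∀ s : ℕ, 0 < s → s • f = 0 → t ≤ s := fun s h1 h2 => ht ▸ Nat.sInf_le ⟨h1, h2⟩
  have ht1 : t ≠ 1 := by
    intro h1
    rw [h1, one_smul] at htf
    exact hfne htf
  obtain ⟨p, hpdef⟩ : ∃ p, p = t.minFac := ⟨_, rfl⟩
  have pp : p.Prime := hpdef ▸ Nat.minFac_prime ht1
  obtain ⟨h, hh⟩ : ∃ h : S[X], h = (t / p) • f := ⟨_, rfl⟩
  have hph : p • h = 0 := by
    rw [hh, smul_smul, Nat.mul_div_cancel' (hpdef ▸ Nat.minFac_dvd t), htf]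
  have hhne : h ≠ 0 := by
    intro h0
    have h2 := htmin (t / p) (Nat.div_pos (hpdef ▸ Nat.minFac_le htpos) pp.pos) (by rw [← hh]; exact h0)
    have hlt : t / p < t := Nat.div_lt_self htpos pp.one_lt
    omega
  have hhN : h ∈ nilRad (S[X]) := hh ▸ TwoSidedIdeal.nsmul_mem _ _ hfN
  have hhinv : tau S h = h := by rw [hh, map_nsmul, hinv]
  have hhdeg : h.natDegree = n := by
    have hle : h.natDegree ≤ n := by
      apply natDegree_le_iff_coeff_eq_zero.mpr
      intro N hN
      rw [hh, coeff_smul, coeff_eq_zero_of_natDegree_lt (by omega), smul_zero]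
    have hge := hmin h hhN hhne
    omega
  have hhtors : ∀ m, p • h.coeff m = 0 := by
    intro m
    rw [← coeff_smul, hph, coeff_zero]
  obtain ⟨g, hg1, hg2⟩ := classify pp h.natDegree h (le_refl _) hhtors hhinv
  have hKnil : (TwoSidedIdeal.comap (Psi S p) (nilRad (S[X]))).IsNil :=
    isNil_comap _ _ (nilRad_isNil _)
      (fun v hv => by rw [Psi_eq_zero pp.two_le hv]; exact IsNilpotent.zero)
  have hgN : g ∈ nilRad (S[X]) := by
    apply mem_nilRad_of_isNil hKnil
    rw [TwoSidedIdeal.mem_comap, hg1]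
    exact hhN
  have hgne : g ≠ 0 := fun h0 => hhne (by rw [← hg1, h0, map_zero])
  rcases Nat.eq_zero_or_pos g.natDegree with hg0 | hg1'
  · have hgC : g = C (g.coeff 0) := eq_C_of_natDegree_le_zero hg0.le
    have hh0 : h.natDegree = 0 := by
      have hhC : h = C (g.coeff 0) := by
        rw [← hg1]
        nth_rewrite 1 [hgC]
        rw [Psi_C]
      rw [hhC, natDegree_C]
    omega
  · have h3 : 2 * g.natDegree ≤ p * g.natDegree := Nat.mul_le_mul_right _ pp.two_le
    have h4 := hmin g hgN hgne
    rw [hhdeg] at hg2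
    omega


end Key

section Wrap

variable {R : Type*} [Ring R]

lemma mem_of_coeffs {f : R[X]} (hco : ∀ m, (C (f.coeff m) : R[X]) ∈ nilRad (R[X])) :
    f ∈ nilRad (R[X]) := by
  have : f = ∑ i ∈ f.support, C (f.coeff i) * X ^ i := by
    conv_lhs => rw [f.as_sum_support]
    exact Finset.sum_congr rfl fun i _ => (C_mul_X_pow_eq_monomial).symm
  rw [this]
  exact TwoSidedIdeal.finsetSum_mem _ _ _
    (fun i _ => TwoSidedIdeal.mul_mem_right _ _ _ (hco i))


end Wrap

end AmitsurAux

open AmitsurAux in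
/-- **Amitsur's theorem for the nil radical of polynomial rings.**  For every ring `R`, the nil
radical of the polynomial ring `R[x]` equals `I[x]` for some nil ideal `I` of `R`: there is a
nil two-sided ideal `I` of `R` such that a polynomial lies in the nil radical of `R[x]` if and
only if all of its coefficients lie in `I`. -/
theorem nilRad_polynomial_eq_nil_ideal_polynomial {R : Type*} [Ring R] :
    ∃ I : TwoSidedIdeal R, I.IsNil ∧
      ∀ f : Polynomial R, f ∈ nilRad (Polynomial R) ↔ ∀ n : ℕ, f.coeff n ∈ I := by
  classical
  refine ⟨TwoSidedIdeal.comap (C : R →+* R[X]) (nilRad (R[X])), ?_, ?_⟩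
  · intro a ha
    rw [TwoSidedIdeal.mem_comap] at ha
    obtain ⟨k, hk⟩ := nilRad_isNil (R[X]) _ ha
    refine ⟨k, ?_⟩
    have h1 : (C (a ^ k) : R[X]) = 0 := by
      rw [map_pow]
      exact hk
    rwa [C_eq_zero] at h1
  · intro f
    constructor
    · intro hf m
      rw [TwoSidedIdeal.mem_comap]
      -- quotient setup
      obtain ⟨I, hI⟩ : ∃ I, I = TwoSidedIdeal.comap (C : R →+* R[X]) (nilRad (R[X])) :=
        ⟨_, rfl⟩
      suffices h : f.coeff m ∈ I by rw [hI, TwoSidedIdeal.mem_comap] at h; exact h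
      have hImem : ∀ a : R, a ∈ I ↔ (C a : R[X]) ∈ nilRad (R[X]) := by
        intro a; rw [hI, TwoSidedIdeal.mem_comap]
      let π : R →+* I.ringCon.Quotient := I.ringCon.mk'
      have hπsurj : Function.Surjective π := mk'_surjective I
      let πh : R[X] →+* (I.ringCon.Quotient)[X] := mapRingHom π
      have hπhsurj : Function.Surjective πh := by
        simpa [πh, coe_mapRingHom] using map_surjective π hπsurj
      have hker : ∀ v : R[X], πh v = 0 → v ∈ nilRad (R[X]) := by
        intro v hv
        apply mem_of_coeffs
        intro k
        rw [← hImem]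
        have h2 : π (v.coeff k) = 0 := by
          have := congrArg (fun q => q.coeff k) hv
          simpa [πh, coeff_map] using this
        rw [← mk'_eq_zero_iff I]
        exact h2
      have hKnil : (TwoSidedIdeal.comap πh (nilRad ((I.ringCon.Quotient)[X]))).IsNil := by
        apply isNil_comap
        · exact nilRad_isNil _
        · intro v hv
          exact nilRad_isNil (R[X]) v (hker v hv)
      have hconst : ∀ c : I.ringCon.Quotient,
          (C c : (I.ringCon.Quotient)[X]) ∈ nilRad ((I.ringCon.Quotient)[X]) → c = 0 := by
        intro c hc
        obtain ⟨a, rfl⟩ := hπsurj c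
        have h3 : (C a : R[X]) ∈ TwoSidedIdeal.comap πh (nilRad ((I.ringCon.Quotient)[X])) := by
          rw [TwoSidedIdeal.mem_comap]
          have : πh (C a) = C (π a) := by simp [πh]
          rwa [this]
        have h4 : (C a : R[X]) ∈ nilRad (R[X]) := mem_nilRad_of_isNil hKnil h3
        have h5 : a ∈ I := (hImem a).mpr h4
        rw [← mk'_eq_zero_iff I] at h5
        exact h5
      have hbot := nilRad_poly_eq_bot _ hconst
      have h6 : πh f ∈ nilRad ((I.ringCon.Quotient)[X]) := by
        apply mem_nilRad_of_isNil (isNil_idealMap πh hπhsurj (nilRad_isNil (R[X])))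
        exact (mem_idealMap πh hπhsurj _).2 ⟨f, hf, rfl⟩
      have h7 : πh f = 0 := hbot _ h6
      have h8 : π (f.coeff m) = 0 := by
        have := congrArg (fun q => q.coeff m) h7
        simpa [πh, coeff_map] using this
      exact (mk'_eq_zero_iff I _).1 h8
    · intro hco
      apply mem_of_coeffs
      intro m
      have := hco m
      rwa [TwoSidedIdeal.mem_comap] at this
end
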